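/- Let I ⊆ ℝ be a nonempty closed interval, possibly unbounded. Suppose that φ : I → ℝ and ψ : I → ℝ are L-Lipschitz functions with φ(x) ≤ ψ(x) for all x ∈ I, and let E = {(x,y) ∈ ℝ² : x ∈ I, φ(x) ≤ y ≤ ψ(x)}. Then there exists a Lipschitz retraction Φ of ℝ² (with the Euclidean metric) onto E, i.e., a map Φ : ℝ² → ℝ² with Φ(ℝ²) ⊆ E and Φ(p) = p for all p ∈ E; moreover Φ can be taken with Lipschitz constant at most √(L² + 1). -/

import Mathlib

/-- Let `I ⊆ ℝ` be a nonempty closed interval (possibly unbounded),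
and let `φ, ψ : I → ℝ` be `L`-Lipschitz with `φ ≤ ψ` on `I`. Then there is a Lipschitz
retraction `Φ` of `ℝ²` (with the Euclidean metric) onto
`E = {(x,y) : x ∈ I, φ(x) ≤ y ≤ ψ(x)}`, with `Lip Φ ≤ √(L² + 1)`. -/
theorem lipschitz_retraction_onto_region_between_graphs
    (I : Set ℝ) (hI_ne : I.Nonempty) (hI_interval : I.OrdConnected)
    (hI_closed : IsClosed I)
    (L : ℝ) (hL : 0 ≤ L) (φ ψ : ℝ → ℝ)
    (hφ : ∀ x ∈ I, ∀ y ∈ I, |φ x - φ y| ≤ L * |x - y|)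
    (hψ : ∀ x ∈ I, ∀ y ∈ I, |ψ x - ψ y| ≤ L * |x - y|)
    (hφψ : ∀ x ∈ I, φ x ≤ ψ x)
    (E : Set (EuclideanSpace ℝ (Fin 2)))
    (hE : E = {q : EuclideanSpace ℝ (Fin 2) | q 0 ∈ I ∧ φ (q 0) ≤ q 1 ∧ q 1 ≤ ψ (q 0)}) :
    ∃ Φ : EuclideanSpace ℝ (Fin 2) → EuclideanSpace ℝ (Fin 2),
      (∀ p, Φ p ∈ E) ∧
      (∀ p ∈ E, Φ p = p) ∧
      (∀ p q, dist (Φ p) (Φ q) ≤ Real.sqrt (L ^ 2 + 1) * dist p q) := by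
  classical
  -- auxiliary min/max one-sided Lipschitz facts
  have auxmax : ∀ c x y : ℝ, |max x c - max y c| ≤ |x - y| := by
    intro c x y
    have := abs_max_sub_max_le_max x c y c
    simpa using this
  have auxmin : ∀ c x y : ℝ, |min x c - min y c| ≤ |x - y| := by
    intro c x y
    have := abs_min_sub_min_le_max x c y c
    simpa using this
  -- the projection onto I
  set π : ℝ → ℝ := fun x =>
    if BddBelow I then
      (if BddAbove I then max (sInf I) (min x (sSup I)) else max (sInf I) x)
    else
      (if BddAbove I then min x (sSup I) else x) with hπ
  have hmem : ∀ x, π x ∈ I := by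
    intro x
    by_cases hb : BddBelow I <;> by_cases ha : BddAbove I <;>
      simp only [hπ, hb, ha, if_true, if_false]
    · have h1 := hI_closed.csInf_mem hI_ne hb
      have h2 := hI_closed.csSup_mem hI_ne ha
      refine hI_interval.out h1 h2 ⟨le_max_left _ _, ?_⟩
      exact max_le (csInf_le_csSup hI_ne hb ha) (min_le_right _ _)
    · obtain ⟨j, hj, hjx⟩ := not_bddAbove_iff.mp ha (max (sInf I) x)
      have h1 := hI_closed.csInf_mem hI_ne hb
      exact hI_interval.out h1 hj ⟨le_max_left _ _, hjx.le⟩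
    · obtain ⟨i, hi, hix⟩ := not_bddBelow_iff.mp hb (min x (sSup I))
      have h2 := hI_closed.csSup_mem hI_ne ha
      exact hI_interval.out hi h2 ⟨hix.le, min_le_right _ _⟩
    · obtain ⟨i, hi, hix⟩ := not_bddBelow_iff.mp hb x
      obtain ⟨j, hj, hjx⟩ := not_bddAbove_iff.mp ha x
      exact hI_interval.out hi hj ⟨hix.le, hjx.le⟩
  have hid : ∀ x ∈ I, π x = x := by
    intro x hx
    by_cases hb : BddBelow I <;> by_cases ha : BddAbove I <;>
      simp only [hπ, hb, ha, if_true, if_false]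
    · rw [min_eq_left (le_csSup ha hx), max_eq_right (csInf_le hb hx)]
    · rw [max_eq_right (csInf_le hb hx)]
    · rw [min_eq_left (le_csSup ha hx)]
  have hlip : ∀ x y, |π x - π y| ≤ |x - y| := by
    intro x y
    by_cases hb : BddBelow I <;> by_cases ha : BddAbove I <;>
      simp only [hπ, hb, ha, if_true, if_false]
    · have h1 : |max (sInf I) (min x (sSup I)) - max (sInf I) (min y (sSup I))| ≤
          |min x (sSup I) - min y (sSup I)| := by
        rw [max_comm (sInf I) (min x (sSup I)), max_comm (sInf I) (min y (sSup I))]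
        exact auxmax _ _ _
      exact h1.trans (auxmin _ _ _)
    · rw [max_comm (sInf I) x, max_comm (sInf I) y]
      exact auxmax _ _ _
    · exact auxmin _ _ _
    · exact le_rfl
  -- the retraction
  set g : EuclideanSpace ℝ (Fin 2) → ℝ :=
    fun p => max (φ (π (p 0))) (min (p 1) (ψ (π (p 0)))) with hg
  set Φ : EuclideanSpace ℝ (Fin 2) → EuclideanSpace ℝ (Fin 2) :=
    fun p => WithLp.toLp 2 (fun i : Fin 2 => if i = 0 then π (p 0) else g p) with hΦ
  have hΦ0 : ∀ p, Φ p 0 = π (p 0) := fun p => rfl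
  have hΦ1 : ∀ p, Φ p 1 = g p := fun p => rfl
  refine ⟨Φ, ?_, ?_, ?_⟩
  · intro p
    rw [hE]
    refine ⟨hmem _, le_max_left _ _, ?_⟩
    exact max_le (hφψ _ (hmem _)) (min_le_right _ _)
  · intro p hp
    rw [hE] at hp
    obtain ⟨h0, h1, h2⟩ := hp
    ext i
    fin_cases i
    · simpa [hΦ0] using hid _ h0
    · show g p = p 1
      rw [hg]
      simp only
      rw [hid _ h0, min_eq_left h2, max_eq_right h1]
  · intro p q
    have hd : ∀ a b : EuclideanSpace ℝ (Fin 2),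
        dist a b = Real.sqrt ((a 0 - b 0) ^ 2 + (a 1 - b 1) ^ 2) := by
      intro a b
      rw [EuclideanSpace.dist_eq, Fin.sum_univ_two, Real.dist_eq, Real.dist_eq,
        sq_abs, sq_abs]
    rw [hd, hd]
    set U := Φ p 0 - Φ q 0 with hU
    set V := Φ p 1 - Φ q 1 with hV
    set X := p 0 - q 0 with hX
    set Y := p 1 - q 1 with hY
    have hUX : |U| ≤ |X| := by rw [hU, hΦ0, hΦ0]; exact hlip _ _
    have hVb : |V| ≤ max |Y| (L * |U|) := by
      rw [hV, hΦ1, hΦ1, hg]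
      simp only
      have hφL : |φ (π (p 0)) - φ (π (q 0))| ≤ L * |U| := by
        rw [hU, hΦ0, hΦ0]
        exact hφ _ (hmem _) _ (hmem _)
      have hψL : |ψ (π (p 0)) - ψ (π (q 0))| ≤ L * |U| := by
        rw [hU, hΦ0, hΦ0]
        exact hψ _ (hmem _) _ (hmem _)
      have h1 := abs_max_sub_max_le_max (φ (π (p 0))) (min (p 1) (ψ (π (p 0))))
        (φ (π (q 0))) (min (q 1) (ψ (π (q 0))))
      have h2 := abs_min_sub_min_le_max (p 1) (ψ (π (p 0))) (q 1) (ψ (π (q 0)))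
      refine h1.trans (max_le (hφL.trans (le_max_right _ _)) (h2.trans ?_))
      exact max_le (le_max_left _ _) (hψL.trans (le_max_right _ _))
    have key : U ^ 2 + V ^ 2 ≤ (L ^ 2 + 1) * (X ^ 2 + Y ^ 2) := by
      rcases max_cases |Y| (L * |U|) with ⟨he, _⟩ | ⟨he, _⟩ <;> rw [he] at hVb <;>
        nlinarith [sq_abs U, sq_abs V, sq_abs X, sq_abs Y, abs_nonneg U, abs_nonneg V,
          abs_nonneg X, abs_nonneg Y, sq_nonneg X, sq_nonneg Y, sq_nonneg (L * |U|),
          mul_self_le_mul_self (abs_nonneg U) hUX]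
    calc Real.sqrt (U ^ 2 + V ^ 2) ≤ Real.sqrt ((L ^ 2 + 1) * (X ^ 2 + Y ^ 2)) :=
          Real.sqrt_le_sqrt key
      _ = Real.sqrt (L ^ 2 + 1) * Real.sqrt (X ^ 2 + Y ^ 2) :=
          Real.sqrt_mul (by positivity) _
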